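/- Let e(w) = ‖A w − b‖² + λ₁‖w‖² + λ₂‖Ψw‖² with A having columns g₁,…,g_n satisfying ‖g_j‖ ≤ ∇_max for all j. Then for any k-sparse difference vector v − w (i.e., at most k nonzero coordinates), e(v) − e(w) − ⟨∇e(w), v − w⟩ ≤ (λ₁ + λ₂‖Ψ‖² + k∇_max²)‖v − w‖², where ‖Ψ‖ is the spectral (operator) norm of Ψ. -/

import Mathlib

open scoped RealInnerProductSpace

/-- Matrix–vector multiplication landing in Euclidean space. -/
noncomputable def mulVecE {d n : ℕ} (A : Matrix (Fin d) (Fin n) ℝ)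
    (w : EuclideanSpace ℝ (Fin n)) : EuclideanSpace ℝ (Fin d) :=
  (WithLp.equiv 2 (Fin d → ℝ)).symm (A.mulVec ((WithLp.equiv 2 (Fin n → ℝ)) w))

/-- The j-th column of a matrix, as a Euclidean vector. -/
noncomputable def colE {d n : ℕ} (A : Matrix (Fin d) (Fin n) ℝ) (j : Fin n) :
    EuclideanSpace ℝ (Fin d) :=
  (WithLp.equiv 2 (Fin d → ℝ)).symm (A.transpose j)

/-- The ℓ²→ℓ² operator (spectral) norm of a matrix. -/
noncomputable def opNormE {d n : ℕ} (A : Matrix (Fin d) (Fin n) ℝ) : ℝ :=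
  ‖LinearMap.toContinuousLinearMap (Matrix.toEuclideanLin A)‖

/-- The smallest singular value of a matrix: the infimum of ‖Ax‖ over unit vectors x. -/
noncomputable def sminE {d n : ℕ} (A : Matrix (Fin d) (Fin n) ℝ) : ℝ :=
  sInf ((fun x : EuclideanSpace ℝ (Fin n) => ‖mulVecE A x‖) '' {x | ‖x‖ = 1})

section aux

variable {E F G : Type*} [NormedAddCommGroup E] [InnerProductSpace ℝ E]
  [NormedAddCommGroup F] [InnerProductSpace ℝ F]
  [NormedAddCommGroup G] [InnerProductSpace ℝ G]
  [CompleteSpace E] [CompleteSpace F] [CompleteSpace G]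

noncomputable def gradQ (T : E →L[ℝ] F) (S : E →L[ℝ] G) (b : F) (l1 l2 : ℝ) (w : E) : E :=
  (2:ℝ) • ((ContinuousLinearMap.adjoint T) (T w - b)) + (2*l1) • w
    + (2*l2) • ((ContinuousLinearMap.adjoint S) (S w))

lemma quad_expand (T : E →L[ℝ] F) (S : E →L[ℝ] G) (b : F) (l1 l2 : ℝ) (w u : E) :
    (‖T (w+u) - b‖^2 + l1*‖w+u‖^2 + l2*‖S (w+u)‖^2)
      - (‖T w - b‖^2 + l1*‖w‖^2 + l2*‖S w‖^2)
      - ⟪gradQ T S b l1 l2 w, u⟫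
    = ‖T u‖^2 + l1*‖u‖^2 + l2*‖S u‖^2 := by
  have h1 : T (w+u) - b = (T w - b) + T u := by rw [map_add]; abel
  have h2 : S (w+u) = S w + S u := map_add S w u
  rw [h1, h2, norm_add_sq_real, norm_add_sq_real, norm_add_sq_real]
  simp only [gradQ, inner_add_left, real_inner_smul_left,
    ContinuousLinearMap.adjoint_inner_left]
  ring

lemma quad_grad (T : E →L[ℝ] F) (S : E →L[ℝ] G) (b : F) (l1 l2 : ℝ) (w : E) :
    HasGradientAt (fun x => ‖T x - b‖^2 + l1*‖x‖^2 + l2*‖S x‖^2)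
      (gradQ T S b l1 l2 w) w := by
  rw [hasGradientAt_iff_hasFDerivAt, hasFDerivAt_iff_isLittleO_nhds_zero]
  have key : (fun u : E => (‖T (w+u) - b‖^2 + l1*‖w+u‖^2 + l2*‖S (w+u)‖^2)
      - (‖T w - b‖^2 + l1*‖w‖^2 + l2*‖S w‖^2)
      - (InnerProductSpace.toDual ℝ E (gradQ T S b l1 l2 w)) u)
      = fun u => ‖T u‖^2 + l1*‖u‖^2 + l2*‖S u‖^2 := by
    funext u
    simpa using quad_expand T S b l1 l2 w u
  rw [key]
  have hO : (fun u => ‖T u‖^2 + l1*‖u‖^2 + l2*‖S u‖^2) =O[nhds (0:E)]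
      (fun u : E => ‖u‖ * ‖u‖) := by
    rw [Asymptotics.isBigO_iff]
    refine ⟨‖T‖^2 + |l1| + |l2| * ‖S‖^2, Filter.Eventually.of_forall fun u => ?_⟩
    have hT : ‖T u‖^2 ≤ ‖T‖^2 * ‖u‖^2 := by
      rw [← mul_pow]
      exact pow_le_pow_left₀ (norm_nonneg _) (T.le_opNorm u) 2
    have hS : ‖S u‖^2 ≤ ‖S‖^2 * ‖u‖^2 := by
      rw [← mul_pow]
      exact pow_le_pow_left₀ (norm_nonneg _) (S.le_opNorm u) 2
    have h1 : l1 * ‖u‖^2 ≤ |l1| * ‖u‖^2 :=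
      mul_le_mul_of_nonneg_right (le_abs_self _) (by positivity)
    have h2 : l2 * ‖S u‖^2 ≤ |l2| * (‖S‖^2 * ‖u‖^2) := by
      calc l2 * ‖S u‖^2 ≤ |l2| * ‖S u‖^2 :=
            mul_le_mul_of_nonneg_right (le_abs_self _) (by positivity)
        _ ≤ |l2| * (‖S‖^2 * ‖u‖^2) := mul_le_mul_of_nonneg_left hS (abs_nonneg _)
    have : ‖T u‖^2 + l1*‖u‖^2 + l2*‖S u‖^2
        ≤ (‖T‖^2 + |l1| + |l2| * ‖S‖^2) * ‖u‖^2 := by nlinarith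
    calc ‖‖T u‖^2 + l1*‖u‖^2 + l2*‖S u‖^2‖
        ≤ (‖T‖^2 + |l1| + |l2| * ‖S‖^2) * ‖u‖^2 := by
          rw [Real.norm_eq_abs, abs_le]
          constructor
          · nlinarith [sq_nonneg ‖T u‖, sq_nonneg ‖u‖, sq_nonneg ‖S u‖, sq_nonneg ‖T‖,
              sq_nonneg ‖S‖, abs_nonneg l1, abs_nonneg l2, le_abs_self l1, le_abs_self l2,
              neg_abs_le l1, neg_abs_le l2, hT, hS, sq_nonneg (‖S‖*‖u‖)]
          · exact this
        _ = (‖T‖^2 + |l1| + |l2| * ‖S‖^2) * ‖(fun u : E => ‖u‖*‖u‖) u‖ := by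
          rw [Real.norm_eq_abs, abs_of_nonneg (by positivity : (0:ℝ) ≤ ‖u‖*‖u‖)]
          ring
  refine hO.trans_isLittleO ?_
  rw [Asymptotics.isLittleO_iff]
  intro c hc
  filter_upwards [Metric.ball_mem_nhds (0:E) hc] with u hu
  rw [Metric.mem_ball, dist_zero_right] at hu
  rw [Real.norm_eq_abs, abs_of_nonneg (by positivity : (0:ℝ) ≤ ‖u‖*‖u‖)]
  exact mul_le_mul_of_nonneg_right hu.le (norm_nonneg _)

end aux

lemma sparse_bound {d n : ℕ} (k : ℕ) (A : Matrix (Fin d) (Fin n) ℝ) (gradmax : ℝ)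
    (hcols : ∀ j : Fin n, ‖colE A j‖ ≤ gradmax)
    (u : EuclideanSpace ℝ (Fin n))
    (hsupp : (Function.support fun j => u j).ncard ≤ k) :
    ‖mulVecE A u‖^2 ≤ k * gradmax^2 * ‖u‖^2 := by
  classical
  set s : Finset (Fin n) := Finset.univ.filter (fun j => u j ≠ 0) with hs
  have hcard : s.card ≤ k := by
    have : (Function.support fun j => u j) = ↑s := by
      ext j; simp [hs, Function.mem_support]
    rw [this, Set.ncard_coe_finset] at hsupp
    exact hsupp
  by_cases hu0 : u = 0
  · simp [hu0, mulVecE]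
  · have hg0 : 0 ≤ gradmax := le_trans (norm_nonneg _) (hcols ⟨0, by
      rcases Nat.eq_zero_or_pos n with h | h
      · exfalso; apply hu0; ext i; exact absurd i.2 (by omega)
      · exact h⟩)
    have hsum : mulVecE A u = ∑ j ∈ s, u j • colE A j := by
      have h1 : mulVecE A u = ∑ j : Fin n, u j • colE A j := by
        ext i
        have hsa : (∑ j : Fin n, u j • colE A j) i = ∑ j : Fin n, (u j • colE A j) i :=
          by rw [WithLp.ofLp_sum]; exact Finset.sum_apply i Finset.univ _
        rw [hsa]
        simp [mulVecE, colE, Matrix.mulVec, dotProduct, mul_comm]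
      rw [h1]
      symm
      apply Finset.sum_subset (Finset.subset_univ s)
      intro j _ hj
      simp only [hs, Finset.mem_filter, Finset.mem_univ, true_and, not_not] at hj
      simp [hj]
    have hnorm : ‖mulVecE A u‖ ≤ gradmax * ∑ j ∈ s, |u j| := by
      rw [hsum]
      calc ‖∑ j ∈ s, u j • colE A j‖ ≤ ∑ j ∈ s, ‖u j • colE A j‖ := norm_sum_le _ _
        _ = ∑ j ∈ s, |u j| * ‖colE A j‖ := by simp [norm_smul, Real.norm_eq_abs]
        _ ≤ ∑ j ∈ s, |u j| * gradmax := by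
            apply Finset.sum_le_sum
            intro j _
            exact mul_le_mul_of_nonneg_left (hcols j) (abs_nonneg _)
        _ = gradmax * ∑ j ∈ s, |u j| := by rw [Finset.mul_sum]; congr 1; ext j; ring
    have hcs : (∑ j ∈ s, |u j|)^2 ≤ s.card * ∑ j ∈ s, (u j)^2 := by
      have := Finset.sum_mul_sq_le_sq_mul_sq s (fun _ => (1:ℝ)) (fun j => |u j|)
      simpa [sq_abs] using this
    have hsub : ∑ j ∈ s, (u j)^2 ≤ ‖u‖^2 := by
      have : ‖u‖^2 = ∑ j : Fin n, (u j)^2 := by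
        rw [EuclideanSpace.norm_eq, Real.sq_sqrt (by positivity)]
        simp [sq_abs]
      rw [this]
      exact Finset.sum_le_sum_of_subset_of_nonneg (Finset.subset_univ s)
        (fun j _ _ => sq_nonneg _)
    calc ‖mulVecE A u‖^2 ≤ (gradmax * ∑ j ∈ s, |u j|)^2 :=
          pow_le_pow_left₀ (norm_nonneg _) hnorm 2
      _ = gradmax^2 * (∑ j ∈ s, |u j|)^2 := by ring
      _ ≤ gradmax^2 * (s.card * ∑ j ∈ s, (u j)^2) :=
          mul_le_mul_of_nonneg_left hcs (by positivity)
      _ ≤ gradmax^2 * (k * ‖u‖^2) := by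
          apply mul_le_mul_of_nonneg_left _ (by positivity)
          apply mul_le_mul (by exact_mod_cast hcard) hsub
            (Finset.sum_nonneg fun j _ => sq_nonneg _) (by positivity)
      _ = k * gradmax^2 * ‖u‖^2 := by ring

theorem stmt2 {d n m : ℕ} (k : ℕ)
    (A : Matrix (Fin d) (Fin n) ℝ) (b : EuclideanSpace ℝ (Fin d))
    (Ψ : Matrix (Fin m) (Fin n) ℝ) (lam₁ lam₂ gradmax : ℝ)
    (hlam₁ : 0 ≤ lam₁) (hlam₂ : 0 ≤ lam₂)
    (hcols : ∀ j : Fin n, ‖colE A j‖ ≤ gradmax)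
    (e : EuclideanSpace ℝ (Fin n) → ℝ)
    (he : ∀ w, e w = ‖mulVecE A w - b‖ ^ 2 + lam₁ * ‖w‖ ^ 2 + lam₂ * ‖mulVecE Ψ w‖ ^ 2) :
    ∀ v w : EuclideanSpace ℝ (Fin n),
      (Function.support fun j => (v - w) j).ncard ≤ k →
      e v - e w - ⟪gradient e w, v - w⟫ ≤
        (lam₁ + lam₂ * opNormE Ψ ^ 2 + k * gradmax ^ 2) * ‖v - w‖ ^ 2 := by
  intro v w hsupp
  set T := LinearMap.toContinuousLinearMap (Matrix.toEuclideanLin A) with hTdef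
  set S := LinearMap.toContinuousLinearMap (Matrix.toEuclideanLin Ψ) with hSdef
  have hTe : ∀ x, mulVecE A x = T x := fun x => rfl
  have hSe : ∀ x, mulVecE Ψ x = S x := fun x => rfl
  have hefun : e = fun x => ‖T x - b‖^2 + lam₁*‖x‖^2 + lam₂*‖S x‖^2 := by
    funext x; rw [he x, hTe x, hSe x]
  have hgrad : gradient e w = gradQ T S b lam₁ lam₂ w := by
    rw [hefun]
    exact (quad_grad T S b lam₁ lam₂ w).gradient
  rw [hgrad]
  have hexp : e v - e w - ⟪gradQ T S b lam₁ lam₂ w, v - w⟫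
      = ‖T (v-w)‖^2 + lam₁*‖v-w‖^2 + lam₂*‖S (v-w)‖^2 := by
    have := quad_expand T S b lam₁ lam₂ w (v - w)
    rw [add_sub_cancel] at this
    rw [hefun]
    exact this
  rw [hexp]
  have hA : ‖T (v-w)‖^2 ≤ k * gradmax^2 * ‖v-w‖^2 := by
    rw [← hTe]
    exact sparse_bound k A gradmax hcols (v - w) hsupp
  have hS2 : lam₂ * ‖S (v-w)‖^2 ≤ lam₂ * (opNormE Ψ ^2 * ‖v-w‖^2) := by
    apply mul_le_mul_of_nonneg_left _ hlam₂
    rw [← mul_pow]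
    exact pow_le_pow_left₀ (norm_nonneg _) (S.le_opNorm (v-w)) 2
  nlinarith [sq_nonneg ‖v-w‖]
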